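/- Let Σ and Σ̂ be symmetric linear maps on the Euclidean space ℝ^m, let α* ∈ ℝ and γ > 0, and assume every eigenvalue of Σ lies in (−∞, α* − γ] ∪ [α*, ∞). Let Π be the orthogonal projection onto the sum of the eigenspaces of Σ corresponding to eigenvalues ≥ α*, and let Π̂ be the orthogonal projection onto the sum of the eigenspaces of Σ̂ corresponding to eigenvalues > α* − γ/2. If ‖Σ̂ − Σ‖ < γ/2 (operator norm), then ‖Π̂ − Π‖ ≤ (2/γ) ‖Σ̂ − Σ‖. -/

import Mathlib

open Module
open scoped InnerProductSpace

noncomputable section SpectralAux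

variable {E : Type*} [NormedAddCommGroup E] [InnerProductSpace ℝ E] [FiniteDimensional ℝ E]
  {n : ℕ}

local notation "⟪" x ", " y "⟫" => @inner ℝ _ _ x y

theorem mem_iSup_eigenspace_iff (hn : Module.finrank ℝ E = n) (T : E →ₗ[ℝ] E) (hT : T.IsSymmetric) (A : Set ℝ) (x : E) :
    x ∈ (⨆ μ ∈ A, Module.End.eigenspace T μ) ↔
      ∀ i : Fin n, hT.eigenvalues hn i ∉ A → ⟪hT.eigenvectorBasis hn i, x⟫ = 0 := by
  constructor
  · intro hx i hi
    have hV : (⨆ μ ∈ A, Module.End.eigenspace T μ) ≤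
        (Module.End.eigenspace T (hT.eigenvalues hn i))ᗮ := by
      refine iSup₂_le fun μ hμ => ?_
      intro u hu
      intro w hw
      exact hT.orthogonalFamily_eigenspaces (fun h : hT.eigenvalues hn i = μ => hi (h ▸ hμ))
        ⟨w, hw⟩ ⟨u, hu⟩
    have hbx := hV hx
    exact hbx _ (hT.hasEigenvector_eigenvectorBasis hn i).1
  · intro h
    rw [← (hT.eigenvectorBasis hn).sum_repr x]
    refine Submodule.sum_mem _ fun i _ => ?_
    by_cases hi : hT.eigenvalues hn i ∈ A
    · refine Submodule.smul_mem _ _ ?_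
      exact (le_iSup₂ (f := fun μ _ => Module.End.eigenspace T μ) _ hi)
        (hT.hasEigenvector_eigenvectorBasis hn i).1
    · have : (hT.eigenvectorBasis hn).repr x i = 0 := by
        rw [(hT.eigenvectorBasis hn).repr_apply_apply]; exact h i hi
      rw [this, zero_smul]; exact Submodule.zero_mem _

theorem iSup_eigenspace_invariant (hn : Module.finrank ℝ E = n) (T : E →ₗ[ℝ] E) (hT : T.IsSymmetric) (A : Set ℝ) (x : E)
    (hx : x ∈ (⨆ μ ∈ A, Module.End.eigenspace T μ)) :
    T x ∈ (⨆ μ ∈ A, Module.End.eigenspace T μ) := by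
  rw [mem_iSup_eigenspace_iff hn T hT] at hx ⊢
  intro i hi
  have : ⟪hT.eigenvectorBasis hn i, T x⟫ = ⟪T (hT.eigenvectorBasis hn i), x⟫ :=
    (hT _ _).symm
  rw [this, hT.apply_eigenvectorBasis hn i, real_inner_smul_left, hx i hi, mul_zero]

theorem orthogonal_iSup_eigenspace (hn : Module.finrank ℝ E = n) (T : E →ₗ[ℝ] E) (hT : T.IsSymmetric) (A : Set ℝ) :
    (⨆ μ ∈ A, Module.End.eigenspace T μ)ᗮ = ⨆ μ ∈ Aᶜ, Module.End.eigenspace T μ := by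
  ext x
  rw [mem_iSup_eigenspace_iff hn T hT, Submodule.mem_orthogonal]
  constructor
  · intro h i hi
    rw [Set.notMem_compl_iff] at hi
    exact h _ ((le_iSup₂ (f := fun μ _ => Module.End.eigenspace T μ) _ hi)
      (hT.hasEigenvector_eigenvectorBasis hn i).1)
  · intro h u hu
    rw [← (hT.eigenvectorBasis hn).sum_inner_mul_inner u x]
    refine Finset.sum_eq_zero fun i _ => ?_
    by_cases hi : hT.eigenvalues hn i ∈ A
    · rw [h i (by simpa using hi), mul_zero]
    · rw [mem_iSup_eigenspace_iff hn T hT] at hu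
      rw [real_inner_comm, hu i hi, zero_mul]

theorem quad_lower (hn : Module.finrank ℝ E = n) (T : E →ₗ[ℝ] E) (hT : T.IsSymmetric) (A : Set ℝ) (c : ℝ)
    (hc : ∀ μ : ℝ, Module.End.HasEigenvalue T μ → μ ∈ A → c ≤ μ) (x : E)
    (hx : x ∈ (⨆ μ ∈ A, Module.End.eigenspace T μ)) :
    c * ‖x‖ ^ 2 ≤ ⟪T x, x⟫ := by
  rw [mem_iSup_eigenspace_iff hn T hT] at hx
  set b := hT.eigenvectorBasis hn with hb
  have h1 : ⟪T x, x⟫ = ∑ i, hT.eigenvalues hn i * (⟪b i, x⟫ * ⟪b i, x⟫) := by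
    rw [← b.sum_inner_mul_inner (T x) x]
    refine Finset.sum_congr rfl fun i _ => ?_
    have : ⟪T x, b i⟫ = hT.eigenvalues hn i * ⟪x, b i⟫ := by
      rw [hT x (b i), hT.apply_eigenvectorBasis hn i, real_inner_smul_right]
      norm_cast
    rw [this, real_inner_comm x (b i), mul_assoc]
  have h2 : ‖x‖ ^ 2 = ∑ i, ⟪b i, x⟫ * ⟪b i, x⟫ := by
    rw [← real_inner_self_eq_norm_sq, ← b.sum_inner_mul_inner x x]
    refine Finset.sum_congr rfl fun i _ => ?_
    rw [real_inner_comm x (b i)]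
  rw [h1, h2, Finset.mul_sum]
  refine Finset.sum_le_sum fun i _ => ?_
  by_cases hz : ⟪b i, x⟫ = 0
  · simp [hz]
  · have hiA : hT.eigenvalues hn i ∈ A := by
      by_contra hiA; exact hz (hx i hiA)
    have := hc _ (hT.hasEigenvalue_eigenvalues hn i) hiA
    exact mul_le_mul_of_nonneg_right this (mul_self_nonneg _)

theorem quad_upper (hn : Module.finrank ℝ E = n) (T : E →ₗ[ℝ] E) (hT : T.IsSymmetric) (A : Set ℝ) (c : ℝ)
    (hc : ∀ μ : ℝ, Module.End.HasEigenvalue T μ → μ ∈ A → μ ≤ c) (x : E)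
    (hx : x ∈ (⨆ μ ∈ A, Module.End.eigenspace T μ)) :
    ⟪T x, x⟫ ≤ c * ‖x‖ ^ 2 := by
  rw [mem_iSup_eigenspace_iff hn T hT] at hx
  set b := hT.eigenvectorBasis hn with hb
  have h1 : ⟪T x, x⟫ = ∑ i, hT.eigenvalues hn i * (⟪b i, x⟫ * ⟪b i, x⟫) := by
    rw [← b.sum_inner_mul_inner (T x) x]
    refine Finset.sum_congr rfl fun i _ => ?_
    have : ⟪T x, b i⟫ = hT.eigenvalues hn i * ⟪x, b i⟫ := by
      rw [hT x (b i), hT.apply_eigenvectorBasis hn i, real_inner_smul_right]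
      norm_cast
    rw [this, real_inner_comm x (b i), mul_assoc]
  have h2 : ‖x‖ ^ 2 = ∑ i, ⟪b i, x⟫ * ⟪b i, x⟫ := by
    rw [← real_inner_self_eq_norm_sq, ← b.sum_inner_mul_inner x x]
    refine Finset.sum_congr rfl fun i _ => ?_
    rw [real_inner_comm x (b i)]
  rw [h1, h2, Finset.mul_sum]
  refine Finset.sum_le_sum fun i _ => ?_
  by_cases hz : ⟪b i, x⟫ = 0
  · simp [hz]
  · have hiA : hT.eigenvalues hn i ∈ A := by
      by_contra hiA; exact hz (hx i hiA)
    have := hc _ (hT.hasEigenvalue_eigenvalues hn i) hiA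
    exact mul_le_mul_of_nonneg_right this (mul_self_nonneg _)

open NormedSpace in
theorem exp_apply_norm_le [CompleteSpace E] (A : E →L[ℝ] E) (a : ℝ)
    (hA : ∀ v, ⟪A v, v⟫ ≤ a * ‖v‖ ^ 2) {t : ℝ} (ht : 0 ≤ t) (v : E) :
    ‖exp (t • A) v‖ ≤ Real.exp (t * a) * ‖v‖ := by
  set u : ℝ → E := fun s => exp (s • A) v with hu_def
  have hu : ∀ s, HasDerivAt u (A (u s)) s := by
    intro s
    have h1 : HasDerivAt (fun s : ℝ => exp (s • A)) (A * exp (s • A)) s :=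
      hasDerivAt_exp_smul_const' A s
    have h2 := h1.clm_apply (hasDerivAt_const s v)
    simpa [ContinuousLinearMap.mul_apply] using h2
  set g : ℝ → ℝ := fun s => Real.exp (-(2 * a) * s) * ⟪u s, u s⟫ with hg_def
  have hg : ∀ s, HasDerivAt g
      (Real.exp (-(2 * a) * s) * (-(2 * a)) * ⟪u s, u s⟫ +
        Real.exp (-(2 * a) * s) * (⟪u s, A (u s)⟫ + ⟪A (u s), u s⟫)) s := by
    intro s
    have h1 : HasDerivAt (fun s : ℝ => Real.exp (-(2 * a) * s))
        (Real.exp (-(2 * a) * s) * (-(2 * a))) s := by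
      simpa using ((hasDerivAt_id s).const_mul (-(2 * a))).exp
    exact h1.mul ((hu s).inner ℝ (hu s))
  have hderiv_nonpos : ∀ s, deriv g s ≤ 0 := by
    intro s
    rw [(hg s).deriv]
    have hinner : ⟪u s, A (u s)⟫ + ⟪A (u s), u s⟫ ≤ 2 * a * ⟪u s, u s⟫ := by
      have h2 := hA (u s)
      have hcomm : ⟪u s, A (u s)⟫ = ⟪A (u s), u s⟫ := real_inner_comm _ _
      rw [hcomm, real_inner_self_eq_norm_sq]
      linarith
    nlinarith [Real.exp_pos (-(2 * a) * s),
      mul_le_mul_of_nonneg_left hinner (Real.exp_pos (-(2 * a) * s)).le]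
  have hanti : Antitone g :=
    antitone_of_deriv_nonpos (fun s => (hg s).differentiableAt) hderiv_nonpos
  have h0 : g t ≤ g 0 := hanti ht
  have hg0 : g 0 = ‖v‖ ^ 2 := by
    simp [hg_def, hu_def, exp_zero, real_inner_self_eq_norm_sq]
  have hgt : g t = Real.exp (-(2 * a) * t) * ‖u t‖ ^ 2 := by
    rw [hg_def]; simp [real_inner_self_eq_norm_sq]
  have hexp2 : Real.exp (t * a) ^ 2 = Real.exp (2 * a * t) := by
    rw [sq, ← Real.exp_add]; ring_nf
  have hnorm2 : ‖u t‖ ^ 2 ≤ (Real.exp (t * a) * ‖v‖) ^ 2 := by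
    rw [hgt, hg0] at h0
    rw [mul_pow, hexp2]
    have hpos : 0 < Real.exp (-(2 * a) * t) := Real.exp_pos _
    have : Real.exp (2 * a * t) * (Real.exp (-(2 * a) * t) * ‖u t‖ ^ 2)
        = ‖u t‖ ^ 2 := by
      rw [← mul_assoc, ← Real.exp_add, show 2 * a * t + -(2 * a) * t = 0 by ring,
        Real.exp_zero, one_mul]
    nlinarith [mul_le_mul_of_nonneg_left h0 (Real.exp_pos (2 * a * t)).le]
  have := Real.sqrt_le_sqrt hnorm2
  rwa [Real.sqrt_sq (norm_nonneg _), Real.sqrt_sq (by positivity)] at this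

open NormedSpace in
theorem exp_opNorm_le [CompleteSpace E] (A : E →L[ℝ] E) (a : ℝ)
    (hA : ∀ v, ⟪A v, v⟫ ≤ a * ‖v‖ ^ 2) {t : ℝ} (ht : 0 ≤ t) :
    ‖exp (t • A)‖ ≤ Real.exp (t * a) :=
  ContinuousLinearMap.opNorm_le_bound _ (Real.exp_nonneg _) (exp_apply_norm_le A a hA ht)

open NormedSpace Filter in
theorem sylvester_bound [CompleteSpace E] (A B X Z : E →L[ℝ] E) (a b : ℝ) (hab : a < b)
    (hA : ∀ v, ⟪A v, v⟫ ≤ a * ‖v‖ ^ 2) (hB : ∀ v, b * ‖v‖ ^ 2 ≤ ⟪B v, v⟫)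
    (hZ : A * X - X * B = Z) : ‖X‖ ≤ ‖Z‖ / (b - a) := by
  have hba : (0:ℝ) < b - a := sub_pos.mpr hab
  have hBneg : ∀ v, ⟪(-B) v, v⟫ ≤ (-b) * ‖v‖ ^ 2 := by
    intro v
    have := hB v
    simp only [ContinuousLinearMap.neg_apply, inner_neg_left]
    linarith
  set f : ℝ → (E →L[ℝ] E) := fun t => exp (t • A) * X * exp (t • (-B)) with hf_def
  have hf : ∀ t, HasDerivAt f (exp (t • A) * Z * exp (t • (-B))) t := by
    intro t
    have h1 : HasDerivAt (fun t : ℝ => exp (t • A)) (A * exp (t • A)) t :=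
      hasDerivAt_exp_smul_const' A t
    have h2 : HasDerivAt (fun t : ℝ => exp (t • (-B))) (exp (t • (-B)) * (-B)) t :=
      hasDerivAt_exp_smul_const (-B) t
    have hcommA : A * exp (t • A) = exp (t • A) * A :=
      (hasDerivAt_exp_smul_const' A t).unique (hasDerivAt_exp_smul_const A t)
    have hcommB : exp (t • (-B)) * (-B) = (-B) * exp (t • (-B)) :=
      (hasDerivAt_exp_smul_const (-B) t).unique (hasDerivAt_exp_smul_const' (-B) t)
    have hL := (h1.mul (hasDerivAt_const t X)).mul h2
    have heq : (A * exp (t • A) * X + exp (t • A) * 0) * exp (t • (-B)) +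
        exp (t • A) * X * (exp (t • (-B)) * (-B)) =
        exp (t • A) * Z * exp (t • (-B)) := by
      rw [← hZ, hcommA, hcommB]
      noncomm_ring
    rw [← heq]
    exact hL
  have hexpAcont : Continuous fun t : ℝ => exp (t • A) :=
    continuous_iff_continuousAt.2 fun t => (hasDerivAt_exp_smul_const A t).continuousAt
  have hexpBcont : Continuous fun t : ℝ => exp (t • (-B)) :=
    continuous_iff_continuousAt.2 fun t => (hasDerivAt_exp_smul_const (-B) t).continuousAt
  have hcont : Continuous fun t : ℝ => exp (t • A) * Z * exp (t • (-B)) :=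
    (hexpAcont.mul continuous_const).mul hexpBcont
  have hf0 : f 0 = X := by
    simp [hf_def, zero_smul, exp_zero]
  have hnormf' : ∀ t : ℝ, 0 ≤ t →
      ‖exp (t • A) * Z * exp (t • (-B))‖ ≤ ‖Z‖ * Real.exp (-(b - a) * t) := by
    intro t ht
    have h1 : ‖exp (t • A)‖ ≤ Real.exp (t * a) := exp_opNorm_le A a hA ht
    have h2 : ‖exp (t • (-B))‖ ≤ Real.exp (t * (-b)) := exp_opNorm_le (-B) (-b) hBneg ht
    calc ‖exp (t • A) * Z * exp (t • (-B))‖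
        ≤ ‖exp (t • A) * Z‖ * ‖exp (t • (-B))‖ := norm_mul_le _ _
      _ ≤ ‖exp (t • A)‖ * ‖Z‖ * ‖exp (t • (-B))‖ :=
          mul_le_mul_of_nonneg_right (norm_mul_le _ _) (norm_nonneg _)
      _ ≤ Real.exp (t * a) * ‖Z‖ * Real.exp (t * (-b)) := by
          have h3 : ‖exp (t • A)‖ * ‖Z‖ ≤ Real.exp (t * a) * ‖Z‖ :=
            mul_le_mul_of_nonneg_right h1 (norm_nonneg _)
          exact mul_le_mul (by exact h3) h2 (norm_nonneg _) (by positivity)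
      _ = ‖Z‖ * Real.exp (-(b - a) * t) := by
          rw [mul_comm (Real.exp (t * a)) ‖Z‖, mul_assoc, ← Real.exp_add]
          ring_nf
  have key : ∀ T : ℝ, 0 ≤ T → ‖X‖ ≤ Real.exp (-(b - a) * T) * ‖X‖ + ‖Z‖ / (b - a) := by
    intro T hT
    have hint : ∫ t in (0:ℝ)..T, (exp (t • A) * Z * exp (t • (-B))) = f T - f 0 :=
      intervalIntegral.integral_eq_sub_of_hasDerivAt (fun t _ => hf t)
        (hcont.intervalIntegrable 0 T)
    have hXeq : X = f T - ∫ t in (0:ℝ)..T, (exp (t • A) * Z * exp (t • (-B))) := by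
      rw [hint, hf0]; abel
    have hfT : ‖f T‖ ≤ Real.exp (-(b - a) * T) * ‖X‖ := by
      have h1 : ‖exp (T • A)‖ ≤ Real.exp (T * a) := exp_opNorm_le A a hA hT
      have h2 : ‖exp (T • (-B))‖ ≤ Real.exp (T * (-b)) := exp_opNorm_le (-B) (-b) hBneg hT
      calc ‖f T‖ ≤ ‖exp (T • A)‖ * ‖X‖ * ‖exp (T • (-B))‖ :=
            le_trans (norm_mul_le _ _)
              (mul_le_mul_of_nonneg_right
                (le_trans (norm_mul_le _ _) le_rfl) (norm_nonneg _))
        _ ≤ Real.exp (T * a) * ‖X‖ * Real.exp (T * (-b)) := by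
            have h3 : ‖exp (T • A)‖ * ‖X‖ ≤ Real.exp (T * a) * ‖X‖ :=
              mul_le_mul_of_nonneg_right h1 (norm_nonneg _)
            exact mul_le_mul h3 h2 (norm_nonneg _) (by positivity)
        _ = Real.exp (-(b - a) * T) * ‖X‖ := by
            rw [mul_comm (Real.exp (T * a)) ‖X‖, mul_assoc, ← Real.exp_add]
            ring_nf
    have hIntBound : ‖∫ t in (0:ℝ)..T, (exp (t • A) * Z * exp (t • (-B)))‖
        ≤ ‖Z‖ / (b - a) := by
      have hmono : (∫ t in (0:ℝ)..T, ‖exp (t • A) * Z * exp (t • (-B))‖)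
          ≤ ∫ t in (0:ℝ)..T, ‖Z‖ * Real.exp (-(b - a) * t) := by
        refine intervalIntegral.integral_mono_on hT
          (hcont.norm.intervalIntegrable 0 T)
          ((continuous_const.mul
            ((continuous_const.mul continuous_id).rexp)).intervalIntegrable 0 T)
          (fun t htmem => hnormf' t htmem.1)
      have hG : ∀ t : ℝ, HasDerivAt (fun t : ℝ => (-‖Z‖ / (b - a)) * Real.exp (-(b - a) * t))
          (‖Z‖ * Real.exp (-(b - a) * t)) t := by
        intro t
        have h := (((hasDerivAt_id t).const_mul (-(b - a))).exp).const_mul (-‖Z‖ / (b - a))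
        simp only [id_eq, mul_one] at h
        refine h.congr_deriv ?_
        field_simp
      have hcalc : (∫ t in (0:ℝ)..T, ‖Z‖ * Real.exp (-(b - a) * t))
          = (-‖Z‖ / (b - a)) * Real.exp (-(b - a) * T) - (-‖Z‖ / (b - a)) * Real.exp 0 := by
        rw [intervalIntegral.integral_eq_sub_of_hasDerivAt (fun t _ => hG t)
          ((continuous_const.mul
            ((continuous_const.mul continuous_id).rexp)).intervalIntegrable 0 T)]
        norm_num
      have hval : (∫ t in (0:ℝ)..T, ‖Z‖ * Real.exp (-(b - a) * t)) ≤ ‖Z‖ / (b - a) := by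
        rw [hcalc, Real.exp_zero]
        have hexp_pos : 0 < Real.exp (-(b - a) * T) := Real.exp_pos _
        have hZnn : (0:ℝ) ≤ ‖Z‖ := norm_nonneg _
        have h2 : -‖Z‖ / (b - a) * Real.exp (-(b - a) * T) - -‖Z‖ / (b - a) * 1 =
            (‖Z‖ * (1 - Real.exp (-(b - a) * T))) / (b - a) := by ring
        rw [h2, div_le_div_iff₀ hba hba]
        nlinarith [mul_nonneg (mul_nonneg hZnn hexp_pos.le) hba.le]
      exact le_trans (le_trans (intervalIntegral.norm_integral_le_integral_norm hT) hmono) hval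
    calc ‖X‖ = ‖f T - ∫ t in (0:ℝ)..T, (exp (t • A) * Z * exp (t • (-B)))‖ := by
          rw [← hXeq]
      _ ≤ ‖f T‖ + ‖∫ t in (0:ℝ)..T, (exp (t • A) * Z * exp (t • (-B)))‖ := norm_sub_le _ _
      _ ≤ Real.exp (-(b - a) * T) * ‖X‖ + ‖Z‖ / (b - a) := add_le_add hfT hIntBound
  have hlim : Tendsto (fun T : ℝ => Real.exp (-(b - a) * T) * ‖X‖ + ‖Z‖ / (b - a))
      atTop (nhds (0 * ‖X‖ + ‖Z‖ / (b - a))) := by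
    refine Filter.Tendsto.add_const _ (Filter.Tendsto.mul_const _ ?_)
    have h1 : Tendsto (fun T : ℝ => -(b - a) * T) atTop atBot :=
      Filter.tendsto_id.const_mul_atTop_of_neg (by linarith)
    exact Real.tendsto_exp_atBot.comp h1
  have := ge_of_tendsto hlim (Filter.eventually_atTop.mpr ⟨0, fun T hT => key T hT⟩)
  simpa using this

end SpectralAux

section MainProof

local notation "⟪" x ", " y "⟫" => @inner ℝ _ _ x y

set_option maxHeartbeats 2000000 in
/-- Equation (7) / Lemma 2.2 (deterministic spectral perturbation bound): if the symmetric
map `S` has no eigenvalue in `(α* - γ, α*)`, `P` is the orthogonal projection onto the sum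
of eigenspaces of `S` for eigenvalues `≥ α*`, `P̂` the orthogonal projection onto the sum of
eigenspaces of `Ŝ` for eigenvalues `> α* - γ/2`, and `‖Ŝ - S‖ < γ/2`, then
`‖P̂ - P‖ ≤ (2/γ)‖Ŝ - S‖`. -/
theorem spectral_projection_perturbation {m : ℕ}
    (S Shat : EuclideanSpace ℝ (Fin m) →L[ℝ] EuclideanSpace ℝ (Fin m))
    (hS : IsSelfAdjoint S) (hShat : IsSelfAdjoint Shat)
    (αstar γ : ℝ) (hγ : 0 < γ)
    (hgap : ∀ μ : ℝ, Module.End.HasEigenvalue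
      (S : EuclideanSpace ℝ (Fin m) →ₗ[ℝ] EuclideanSpace ℝ (Fin m)) μ →
        μ ≤ αstar - γ ∨ αstar ≤ μ)
    (K Khat : Submodule ℝ (EuclideanSpace ℝ (Fin m)))
    (hK : K = ⨆ μ ∈ {μ : ℝ | αstar ≤ μ}, Module.End.eigenspace
      (S : EuclideanSpace ℝ (Fin m) →ₗ[ℝ] EuclideanSpace ℝ (Fin m)) μ)
    (hKhat : Khat = ⨆ μ ∈ {μ : ℝ | αstar - γ / 2 < μ}, Module.End.eigenspace
      (Shat : EuclideanSpace ℝ (Fin m) →ₗ[ℝ] EuclideanSpace ℝ (Fin m)) μ)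
    (P Phat : EuclideanSpace ℝ (Fin m) →L[ℝ] EuclideanSpace ℝ (Fin m))
    (hP : ∀ v, P v = K.orthogonalProjectionOnto v)
    (hPhat : ∀ v, Phat v = Khat.orthogonalProjectionOnto v)
    (hpert : ‖Shat - S‖ < γ / 2) :
    ‖Phat - P‖ ≤ (2 / γ) * ‖Shat - S‖ := by

  have hn : Module.finrank ℝ (EuclideanSpace ℝ (Fin m)) = m := finrank_euclideanSpace_fin
  have hSsym : (S : EuclideanSpace ℝ (Fin m) →ₗ[ℝ] EuclideanSpace ℝ (Fin m)).IsSymmetric :=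
    hS.isSymmetric
  have hShatsym : (Shat : EuclideanSpace ℝ (Fin m) →ₗ[ℝ] EuclideanSpace ℝ (Fin m)).IsSymmetric :=
    hShat.isSymmetric
  -- basic projection facts
  have hPmem : ∀ v, P v ∈ K := fun v => by rw [hP v]; exact (K.orthogonalProjectionOnto v).2
  have hPperp : ∀ v, v - P v ∈ Kᗮ := fun v => by
    rw [hP v]; exact K.sub_starProjection_mem_orthogonal v
  have hPid : ∀ x ∈ K, P x = x := fun x hx => by
    rw [hP x]; exact K.starProjection_eq_self_iff.mpr hx
  have hPzero : ∀ x ∈ Kᗮ, P x = 0 := fun x hx => by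
    rw [hP x, Submodule.orthogonalProjectionOnto_apply_of_mem_orthogonal hx,
      Submodule.coe_zero]
  have hPhatmem : ∀ v, Phat v ∈ Khat := fun v => by
    rw [hPhat v]; exact (Khat.orthogonalProjectionOnto v).2
  have hPhatperp : ∀ v, v - Phat v ∈ Khatᗮ := fun v => by
    rw [hPhat v]; exact Khat.sub_starProjection_mem_orthogonal v
  have hPhatid : ∀ x ∈ Khat, Phat x = x := fun x hx => by
    rw [hPhat x]; exact Khat.starProjection_eq_self_iff.mpr hx
  have hPhatzero : ∀ x ∈ Khatᗮ, Phat x = 0 := fun x hx => by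
    rw [hPhat x, Submodule.orthogonalProjectionOnto_apply_of_mem_orthogonal hx,
      Submodule.coe_zero]
  have hPsa : ∀ u v, ⟪P u, v⟫ = ⟪u, P v⟫ := fun u v => by
    rw [hP u, hP v]; exact Submodule.inner_starProjection_left_eq_right K u v
  have hPhatsa : ∀ u v, ⟪Phat u, v⟫ = ⟪u, Phat v⟫ := fun u v => by
    rw [hPhat u, hPhat v]; exact Submodule.inner_starProjection_left_eq_right Khat u v
  -- invariance
  have hSK : ∀ x ∈ K, S x ∈ K := by
    intro x hx
    rw [hK] at hx ⊢
    exact iSup_eigenspace_invariant hn _ hSsym _ x hx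
  have hKperp_eq : Kᗮ = ⨆ μ ∈ {μ : ℝ | αstar ≤ μ}ᶜ, Module.End.eigenspace
      (S : EuclideanSpace ℝ (Fin m) →ₗ[ℝ] EuclideanSpace ℝ (Fin m)) μ := by
    rw [hK]; exact orthogonal_iSup_eigenspace hn _ hSsym _
  have hKhatperp_eq : Khatᗮ = ⨆ μ ∈ {μ : ℝ | αstar - γ / 2 < μ}ᶜ, Module.End.eigenspace
      (Shat : EuclideanSpace ℝ (Fin m) →ₗ[ℝ] EuclideanSpace ℝ (Fin m)) μ := by
    rw [hKhat]; exact orthogonal_iSup_eigenspace hn _ hShatsym _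
  have hSKperp : ∀ x ∈ Kᗮ, S x ∈ Kᗮ := by
    intro x hx
    rw [hKperp_eq] at hx ⊢
    exact iSup_eigenspace_invariant hn _ hSsym _ x hx
  have hShatKhat : ∀ x ∈ Khat, Shat x ∈ Khat := by
    intro x hx
    rw [hKhat] at hx ⊢
    exact iSup_eigenspace_invariant hn _ hShatsym _ x hx
  have hShatKhatperp : ∀ x ∈ Khatᗮ, Shat x ∈ Khatᗮ := by
    intro x hx
    rw [hKhatperp_eq] at hx ⊢
    exact iSup_eigenspace_invariant hn _ hShatsym _ x hx
  -- commutation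
  have hSP : ∀ v, P (S v) = S (P v) := by
    intro v
    have h1 : S (P v) ∈ K := hSK _ (hPmem v)
    have h2 : S (v - P v) ∈ Kᗮ := hSKperp _ (hPperp v)
    have hsplit : S v = S (P v) + S (v - P v) := by rw [← map_add, add_sub_cancel]
    rw [hsplit, map_add, hPid _ h1, hPzero _ h2, add_zero]
  have hShatPhat : ∀ v, Phat (Shat v) = Shat (Phat v) := by
    intro v
    have h1 : Shat (Phat v) ∈ Khat := hShatKhat _ (hPhatmem v)
    have h2 : Shat (v - Phat v) ∈ Khatᗮ := hShatKhatperp _ (hPhatperp v)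
    have hsplit : Shat v = Shat (Phat v) + Shat (v - Phat v) := by
      rw [← map_add, add_sub_cancel]
    rw [hsplit, map_add, hPhatid _ h1, hPhatzero _ h2, add_zero]
  -- quadratic bounds
  have hKlow : ∀ x ∈ K, αstar * ‖x‖ ^ 2 ≤ ⟪S x, x⟫ := by
    intro x hx
    rw [hK] at hx
    exact quad_lower hn _ hSsym _ αstar (fun μ _ hμ => hμ) x hx
  have hKperp_up : ∀ x ∈ Kᗮ, ⟪S x, x⟫ ≤ (αstar - γ) * ‖x‖ ^ 2 := by
    intro x hx
    rw [hKperp_eq] at hx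
    refine quad_upper hn _ hSsym _ (αstar - γ) (fun μ hev hμ => ?_) x hx
    rcases hgap μ hev with h | h
    · exact h
    · exact absurd h hμ
  have hKhatlow : ∀ x ∈ Khat, (αstar - γ / 2) * ‖x‖ ^ 2 ≤ ⟪Shat x, x⟫ := by
    intro x hx
    rw [hKhat] at hx
    exact quad_lower hn _ hShatsym _ (αstar - γ / 2) (fun μ _ hμ => le_of_lt hμ) x hx
  have hKhatperp_up : ∀ x ∈ Khatᗮ, ⟪Shat x, x⟫ ≤ (αstar - γ / 2) * ‖x‖ ^ 2 := by
    intro x hx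
    rw [hKhatperp_eq] at hx
    refine quad_upper hn _ hShatsym _ (αstar - γ / 2) (fun μ _ hμ => ?_) x hx
    exact not_lt.mp hμ
  -- complementary projections
  set Q : EuclideanSpace ℝ (Fin m) →L[ℝ] EuclideanSpace ℝ (Fin m) := 1 - P with hQdef
  set Qhat : EuclideanSpace ℝ (Fin m) →L[ℝ] EuclideanSpace ℝ (Fin m) := 1 - Phat with hQhatdef
  have hQapp : ∀ v, Q v = v - P v := fun v => by
    simp [hQdef, ContinuousLinearMap.sub_apply]
  have hQhatapp : ∀ v, Qhat v = v - Phat v := fun v => by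
    simp [hQhatdef, ContinuousLinearMap.sub_apply]
  have hQmem : ∀ v, Q v ∈ Kᗮ := fun v => by rw [hQapp]; exact hPperp v
  have hQhatmem : ∀ v, Qhat v ∈ Khatᗮ := fun v => by rw [hQhatapp]; exact hPhatperp v
  have hPP : ∀ v, P (P v) = P v := fun v => hPid _ (hPmem v)
  have hPhatPhat : ∀ v, Phat (Phat v) = Phat v := fun v => hPhatid _ (hPhatmem v)
  have hPQ : ∀ v, P (Q v) = 0 := fun v => hPzero _ (hQmem v)
  have hPhatQhat : ∀ v, Phat (Qhat v) = 0 := fun v => hPhatzero _ (hQhatmem v)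
  have hQfix : ∀ x ∈ Kᗮ, Q x = x := fun x hx => by rw [hQapp, hPzero x hx, sub_zero]
  have hQhatfix : ∀ x ∈ Khatᗮ, Qhat x = x := fun x hx => by
    rw [hQhatapp, hPhatzero x hx, sub_zero]
  have hQQ : ∀ v, Q (Q v) = Q v := fun v => hQfix _ (hQmem v)
  have hQhatQhat : ∀ v, Qhat (Qhat v) = Qhat v := fun v => hQhatfix _ (hQhatmem v)
  have hQP : ∀ v, Q (P v) = 0 := fun v => by rw [hQapp, hPP, sub_self]
  have hQhatPhat : ∀ v, Qhat (Phat v) = 0 := fun v => by rw [hQhatapp, hPhatPhat, sub_self]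
  have hQsa : ∀ u v, ⟪Q u, v⟫ = ⟪u, Q v⟫ := fun u v => by
    rw [hQapp, hQapp, inner_sub_left, inner_sub_right, hPsa]
  have hQhatsa : ∀ u v, ⟪Qhat u, v⟫ = ⟪u, Qhat v⟫ := fun u v => by
    rw [hQhatapp, hQhatapp, inner_sub_left, inner_sub_right, hPhatsa]
  have hPinner : ∀ v, ⟪P v, v⟫ = ‖P v‖ ^ 2 := by
    intro v
    have h0 : ⟪P v, v - P v⟫ = 0 :=
      (Submodule.mem_orthogonal K _).mp (hPperp v) _ (hPmem v)
    rw [inner_sub_right] at h0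
    rw [← real_inner_self_eq_norm_sq]
    linarith
  have hPhatinner : ∀ v, ⟪Phat v, v⟫ = ‖Phat v‖ ^ 2 := by
    intro v
    have h0 : ⟪Phat v, v - Phat v⟫ = 0 :=
      (Submodule.mem_orthogonal Khat _).mp (hPhatperp v) _ (hPhatmem v)
    rw [inner_sub_right] at h0
    rw [← real_inner_self_eq_norm_sq]
    linarith
  have hpyth : ∀ v, ‖P v‖ ^ 2 + ‖Q v‖ ^ 2 = ‖v‖ ^ 2 := by
    intro v
    have h0 : ⟪P v, Q v⟫ = 0 :=
      (Submodule.mem_orthogonal K _).mp (hQmem v) _ (hPmem v)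
    have hv : v = P v + Q v := by rw [hQapp]; abel
    calc ‖P v‖ ^ 2 + ‖Q v‖ ^ 2 = ‖P v + Q v‖ ^ 2 := by
          rw [norm_add_sq_real, h0]; ring
      _ = ‖v‖ ^ 2 := by rw [← hv]
  have hpythhat : ∀ v, ‖Phat v‖ ^ 2 + ‖Qhat v‖ ^ 2 = ‖v‖ ^ 2 := by
    intro v
    have h0 : ⟪Phat v, Qhat v⟫ = 0 :=
      (Submodule.mem_orthogonal Khat _).mp (hQhatmem v) _ (hPhatmem v)
    have hv : v = Phat v + Qhat v := by rw [hQhatapp]; abel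
    calc ‖Phat v‖ ^ 2 + ‖Qhat v‖ ^ 2 = ‖Phat v + Qhat v‖ ^ 2 := by
          rw [norm_add_sq_real, h0]; ring
      _ = ‖v‖ ^ 2 := by rw [← hv]
  have hPnorm : ∀ v, ‖P v‖ ≤ ‖v‖ := fun v => by
    nlinarith [hpyth v, norm_nonneg (P v), norm_nonneg (Q v), norm_nonneg v]
  have hQnorm : ∀ v, ‖Q v‖ ≤ ‖v‖ := fun v => by
    nlinarith [hpyth v, norm_nonneg (P v), norm_nonneg (Q v), norm_nonneg v]
  have hPhatnorm : ∀ v, ‖Phat v‖ ≤ ‖v‖ := fun v => by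
    nlinarith [hpythhat v, norm_nonneg (Phat v), norm_nonneg (Qhat v), norm_nonneg v]
  have hQhatnorm : ∀ v, ‖Qhat v‖ ≤ ‖v‖ := fun v => by
    nlinarith [hpythhat v, norm_nonneg (Phat v), norm_nonneg (Qhat v), norm_nonneg v]
  -- the Sylvester operators
  set a1 : ℝ := αstar - γ with ha1
  set b1 : ℝ := αstar - γ / 2 with hb1
  set A1 := Q * S * Q + a1 • P with hA1def
  set B1 := Phat * Shat * Phat + b1 • Qhat with hB1def
  set X1 := Phat * Q with hX1def
  set Z1 := Phat * (Shat - S) * Q with hZ1def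
  set A2 := Qhat * Shat * Qhat + b1 • Phat with hA2def
  set B2 := P * S * P + αstar • Q with hB2def
  set X2 := Qhat * P with hX2def
  set Z2 := Qhat * (Shat - S) * P with hZ2def
  have hId1 : B1 * X1 - X1 * A1 = Z1 := by
    ext v
    simp only [hB1def, hX1def, hA1def, hZ1def, ContinuousLinearMap.sub_apply,
      ContinuousLinearMap.mul_apply, ContinuousLinearMap.add_apply,
      ContinuousLinearMap.smul_apply, map_add, map_smul, hPhatPhat, hQhatPhat, hQQ, hQP,
      map_zero, smul_zero, add_zero]
    rw [← hShatPhat (Q v), hPhatPhat (Shat (Q v)), hQfix _ (hSKperp _ (hQmem v)), map_sub]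
  have hId2 : A2 * X2 - X2 * B2 = Z2 := by
    ext v
    simp only [hA2def, hX2def, hB2def, hZ2def, ContinuousLinearMap.sub_apply,
      ContinuousLinearMap.mul_apply, ContinuousLinearMap.add_apply,
      ContinuousLinearMap.smul_apply, map_add, map_smul, hQhatQhat, hPhatQhat, hPP, hPQ,
      map_zero, smul_zero, add_zero]
    have hcomm2 : Shat (Qhat (P v)) = Qhat (Shat (P v)) := by
      rw [hQhatapp (P v), hQhatapp (Shat (P v)), map_sub, hShatPhat]
    rw [hcomm2, hQhatQhat (Shat (P v)), hPid _ (hSK _ (hPmem v)), map_sub]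
  have hQinner : ∀ v, ⟪Q v, v⟫ = ‖Q v‖ ^ 2 := by
    intro v
    have h0 : ⟪P v, Q v⟫ = 0 :=
      (Submodule.mem_orthogonal K _).mp (hQmem v) _ (hPmem v)
    have hv : v = P v + Q v := by rw [hQapp]; abel
    calc ⟪Q v, v⟫ = ⟪Q v, P v + Q v⟫ := by rw [← hv]
      _ = ⟪Q v, P v⟫ + ⟪Q v, Q v⟫ := inner_add_right _ _ _
      _ = ‖Q v‖ ^ 2 := by
          have h0' : ⟪Q v, P v⟫ = 0 := by rw [real_inner_comm]; exact h0
          rw [h0', zero_add, real_inner_self_eq_norm_sq]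
  have hQhatinner : ∀ v, ⟪Qhat v, v⟫ = ‖Qhat v‖ ^ 2 := by
    intro v
    have h0 : ⟪Phat v, Qhat v⟫ = 0 :=
      (Submodule.mem_orthogonal Khat _).mp (hQhatmem v) _ (hPhatmem v)
    have hv : v = Phat v + Qhat v := by rw [hQhatapp]; abel
    calc ⟪Qhat v, v⟫ = ⟪Qhat v, Phat v + Qhat v⟫ := by rw [← hv]
      _ = ⟪Qhat v, Phat v⟫ + ⟪Qhat v, Qhat v⟫ := inner_add_right _ _ _
      _ = ‖Qhat v‖ ^ 2 := by
          have h0' : ⟪Qhat v, Phat v⟫ = 0 := by rw [real_inner_comm]; exact h0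
          rw [h0', zero_add, real_inner_self_eq_norm_sq]
  -- form bounds
  have hA1form : ∀ v, ⟪A1 v, v⟫ ≤ a1 * ‖v‖ ^ 2 := by
    intro v
    have hexp : ⟪A1 v, v⟫ = ⟪S (Q v), Q v⟫ + a1 * ‖P v‖ ^ 2 := by
      simp only [hA1def, ContinuousLinearMap.add_apply, ContinuousLinearMap.mul_apply,
        ContinuousLinearMap.smul_apply, inner_add_left, real_inner_smul_left]
      rw [hQsa (S (Q v)) v, hPinner]
    have h1 : ⟪S (Q v), Q v⟫ ≤ a1 * ‖Q v‖ ^ 2 := hKperp_up _ (hQmem v)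
    have h3 : a1 * ‖v‖ ^ 2 = a1 * ‖P v‖ ^ 2 + a1 * ‖Q v‖ ^ 2 := by
      rw [← hpyth v]; ring
    rw [hexp]
    linarith
  have hB1form : ∀ v, b1 * ‖v‖ ^ 2 ≤ ⟪B1 v, v⟫ := by
    intro v
    have hexp : ⟪B1 v, v⟫ = ⟪Shat (Phat v), Phat v⟫ + b1 * ‖Qhat v‖ ^ 2 := by
      simp only [hB1def, ContinuousLinearMap.add_apply, ContinuousLinearMap.mul_apply,
        ContinuousLinearMap.smul_apply, inner_add_left, real_inner_smul_left]
      rw [hPhatsa (Shat (Phat v)) v, hQhatinner]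
    have h1 : b1 * ‖Phat v‖ ^ 2 ≤ ⟪Shat (Phat v), Phat v⟫ := hKhatlow _ (hPhatmem v)
    have h3 : b1 * ‖v‖ ^ 2 = b1 * ‖Phat v‖ ^ 2 + b1 * ‖Qhat v‖ ^ 2 := by
      rw [← hpythhat v]; ring
    rw [hexp]
    linarith
  have hA2form : ∀ v, ⟪A2 v, v⟫ ≤ b1 * ‖v‖ ^ 2 := by
    intro v
    have hexp : ⟪A2 v, v⟫ = ⟪Shat (Qhat v), Qhat v⟫ + b1 * ‖Phat v‖ ^ 2 := by
      simp only [hA2def, ContinuousLinearMap.add_apply, ContinuousLinearMap.mul_apply,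
        ContinuousLinearMap.smul_apply, inner_add_left, real_inner_smul_left]
      rw [hQhatsa (Shat (Qhat v)) v, hPhatinner]
    have h1 : ⟪Shat (Qhat v), Qhat v⟫ ≤ b1 * ‖Qhat v‖ ^ 2 := hKhatperp_up _ (hQhatmem v)
    have h3 : b1 * ‖v‖ ^ 2 = b1 * ‖Phat v‖ ^ 2 + b1 * ‖Qhat v‖ ^ 2 := by
      rw [← hpythhat v]; ring
    rw [hexp]
    linarith
  have hB2form : ∀ v, αstar * ‖v‖ ^ 2 ≤ ⟪B2 v, v⟫ := by
    intro v
    have hexp : ⟪B2 v, v⟫ = ⟪S (P v), P v⟫ + αstar * ‖Q v‖ ^ 2 := by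
      simp only [hB2def, ContinuousLinearMap.add_apply, ContinuousLinearMap.mul_apply,
        ContinuousLinearMap.smul_apply, inner_add_left, real_inner_smul_left]
      rw [hPsa (S (P v)) v, hQinner]
    have h1 : αstar * ‖P v‖ ^ 2 ≤ ⟪S (P v), P v⟫ := hKlow _ (hPmem v)
    have h3 : αstar * ‖v‖ ^ 2 = αstar * ‖P v‖ ^ 2 + αstar * ‖Q v‖ ^ 2 := by
      rw [← hpyth v]; ring
    rw [hexp]
    linarith
  -- norm of the Z operators
  have hZ1norm : ‖Z1‖ ≤ ‖Shat - S‖ := by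
    refine ContinuousLinearMap.opNorm_le_bound _ (norm_nonneg _) fun v => ?_
    have hv : Z1 v = Phat ((Shat - S) (Q v)) := by
      simp [hZ1def, ContinuousLinearMap.mul_apply]
    rw [hv]
    calc ‖Phat ((Shat - S) (Q v))‖ ≤ ‖(Shat - S) (Q v)‖ := hPhatnorm _
      _ ≤ ‖Shat - S‖ * ‖Q v‖ := ContinuousLinearMap.le_opNorm _ _
      _ ≤ ‖Shat - S‖ * ‖v‖ := mul_le_mul_of_nonneg_left (hQnorm v) (norm_nonneg _)
  have hZ2norm : ‖Z2‖ ≤ ‖Shat - S‖ := by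
    refine ContinuousLinearMap.opNorm_le_bound _ (norm_nonneg _) fun v => ?_
    have hv : Z2 v = Qhat ((Shat - S) (P v)) := by
      simp [hZ2def, ContinuousLinearMap.mul_apply]
    rw [hv]
    calc ‖Qhat ((Shat - S) (P v))‖ ≤ ‖(Shat - S) (P v)‖ := hQhatnorm _
      _ ≤ ‖Shat - S‖ * ‖P v‖ := ContinuousLinearMap.le_opNorm _ _
      _ ≤ ‖Shat - S‖ * ‖v‖ := mul_le_mul_of_nonneg_left (hPnorm v) (norm_nonneg _)
  -- Sylvester bounds
  set M : ℝ := ‖Shat - S‖ / (γ / 2) with hMdef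
  have hMnonneg : 0 ≤ M := div_nonneg (norm_nonneg _) (by linarith)
  have hX1norm : ‖X1‖ ≤ M := by
    have hab : -b1 < -a1 := by rw [ha1, hb1]; linarith
    have hnegB : ∀ v, ⟪(-B1) v, v⟫ ≤ (-b1) * ‖v‖ ^ 2 := fun v => by
      simp only [ContinuousLinearMap.neg_apply, inner_neg_left]
      have := hB1form v; linarith
    have hnegA : ∀ v, (-a1) * ‖v‖ ^ 2 ≤ ⟪(-A1) v, v⟫ := fun v => by
      simp only [ContinuousLinearMap.neg_apply, inner_neg_left]
      have := hA1form v; linarith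
    have hid : (-B1) * X1 - X1 * (-A1) = -Z1 := by
      have h1 : (-B1) * X1 = -(B1 * X1) := by
        ext w; simp [ContinuousLinearMap.mul_apply]
      have h2 : X1 * (-A1) = -(X1 * A1) := by
        ext w; simp [ContinuousLinearMap.mul_apply]
      rw [h1, h2, sub_neg_eq_add, ← hId1]
      abel
    have h := sylvester_bound (-B1) (-A1) X1 (-Z1) (-b1) (-a1) hab hnegB hnegA hid
    rw [norm_neg] at h
    have heq : -a1 - -b1 = γ / 2 := by rw [ha1, hb1]; ring
    rw [heq] at h
    refine le_trans h ?_
    rw [hMdef]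
    exact (div_le_div_iff_of_pos_right (by linarith : (0:ℝ) < γ / 2)).mpr hZ1norm
  have hX2norm : ‖X2‖ ≤ M := by
    have hab : b1 < αstar := by rw [hb1]; linarith
    have h := sylvester_bound A2 B2 X2 Z2 b1 αstar hab hA2form hB2form hId2
    have heq : αstar - b1 = γ / 2 := by rw [hb1]; ring
    rw [heq] at h
    refine le_trans h ?_
    rw [hMdef]
    exact (div_le_div_iff_of_pos_right (by linarith : (0:ℝ) < γ / 2)).mpr hZ2norm
  -- combine
  have hgoalM : (2 / γ) * ‖Shat - S‖ = M := by
    rw [hMdef, div_div_eq_mul_div]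
    ring
  rw [hgoalM]
  refine ContinuousLinearMap.opNorm_le_bound _ hMnonneg fun v => ?_
  have hdiff : (Phat - P) v = X1 v - X2 v := by
    simp only [hX1def, hX2def, ContinuousLinearMap.sub_apply, ContinuousLinearMap.mul_apply]
    rw [hQapp, hQhatapp, map_sub]
    abel
  have hX1mem : X1 v ∈ Khat := by
    simp only [hX1def, ContinuousLinearMap.mul_apply]; exact hPhatmem _
  have hX2mem : X2 v ∈ Khatᗮ := by
    simp only [hX2def, ContinuousLinearMap.mul_apply]; exact hQhatmem _
  have horth : ⟪X1 v, X2 v⟫ = 0 :=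
    (Submodule.mem_orthogonal Khat _).mp hX2mem _ hX1mem
  have hsq : ‖(Phat - P) v‖ ^ 2 = ‖X1 v‖ ^ 2 + ‖X2 v‖ ^ 2 := by
    rw [hdiff, norm_sub_sq_real, horth]; ring
  have hb1v : ‖X1 v‖ ≤ M * ‖Q v‖ := by
    have hfix : X1 (Q v) = X1 v := by
      simp only [hX1def, ContinuousLinearMap.mul_apply, hQQ]
    calc ‖X1 v‖ = ‖X1 (Q v)‖ := by rw [hfix]
      _ ≤ ‖X1‖ * ‖Q v‖ := ContinuousLinearMap.le_opNorm _ _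
      _ ≤ M * ‖Q v‖ := mul_le_mul_of_nonneg_right hX1norm (norm_nonneg _)
  have hb2v : ‖X2 v‖ ≤ M * ‖P v‖ := by
    have hfix : X2 (P v) = X2 v := by
      simp only [hX2def, ContinuousLinearMap.mul_apply, hPP]
    calc ‖X2 v‖ = ‖X2 (P v)‖ := by rw [hfix]
      _ ≤ ‖X2‖ * ‖P v‖ := ContinuousLinearMap.le_opNorm _ _
      _ ≤ M * ‖P v‖ := mul_le_mul_of_nonneg_right hX2norm (norm_nonneg _)
  have hsqle : ‖(Phat - P) v‖ ^ 2 ≤ (M * ‖v‖) ^ 2 := by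
    have h1 : ‖X1 v‖ ^ 2 ≤ (M * ‖Q v‖) ^ 2 := by
      nlinarith [norm_nonneg (X1 v), norm_nonneg (Q v), hb1v]
    have h2 : ‖X2 v‖ ^ 2 ≤ (M * ‖P v‖) ^ 2 := by
      nlinarith [norm_nonneg (X2 v), norm_nonneg (P v), hb2v]
    have h3 := hpyth v
    have h4 : (M * ‖Q v‖) ^ 2 + (M * ‖P v‖) ^ 2 = (M * ‖v‖) ^ 2 := by
      rw [mul_pow, mul_pow, mul_pow, ← h3]; ring
    rw [hsq]
    linarith
  have := Real.sqrt_le_sqrt hsqle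
  rwa [Real.sqrt_sq (norm_nonneg _), Real.sqrt_sq (by positivity)] at this

end MainProof
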